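/- For the prolonged action of the 𝔰𝔩₃ vector fields X = (a₀ + a₁₁x + a₁₂y)∂ₓ + (b₀ + a₂₁x + a₂₂y)∂_y + (c₁x + c₂y)(x∂ₓ + y∂_y) on the jet variables of a single function f(x,y,p) (prolongation of the contact lift to ℝ³(x,y,p) and then to first-order jets of f), the function I₁ = p f_y f_p − 3 f f_y + f_x f_p is a relative invariant with weight μ(I₁) = −4a₁₁ + a₂₂ − 5a₁₂p − 7c₁x − c₂(5xp + 2y), given that I₀ = f is a relative invariant with weight μ(I₀) = −2a₁₁ + a₂₂ − 3a₁₂p − 3c₁x − 3c₂xp; moreover the identity μ(I₁)·I₁ = X̂(I₁) can be verified where X̂ is the full prolongation. -/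

import Mathlib

noncomputable section

/-- Partials of a curried function of two variables. -/
def dX (F : ℝ → ℝ → ℝ) (x y : ℝ) : ℝ := deriv (fun t => F t y) x
def dY (F : ℝ → ℝ → ℝ) (x y : ℝ) : ℝ := deriv (fun t => F x t) y

/-- The 𝔰𝔩₃ vector field components on ℝ²(x,y). -/
def xi (a₀ a₁₁ a₁₂ c₁ c₂ : ℝ) (x y : ℝ) : ℝ :=
  a₀ + a₁₁ * x + a₁₂ * y + (c₁ * x + c₂ * y) * x
def eta (b₀ a₂₁ a₂₂ c₁ c₂ : ℝ) (x y : ℝ) : ℝ :=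
  b₀ + a₂₁ * x + a₂₂ * y + (c₁ * x + c₂ * y) * y

/-- The contact lift component `ζ = η_x + p(η_y − ξ_x) − p²ξ_y`. -/
def zeta (a₀ a₁₁ a₁₂ b₀ a₂₁ a₂₂ c₁ c₂ : ℝ) (x y p : ℝ) : ℝ :=
  dX (eta b₀ a₂₁ a₂₂ c₁ c₂) x y
    + p * (dY (eta b₀ a₂₁ a₂₂ c₁ c₂) x y - dX (xi a₀ a₁₁ a₁₂ c₁ c₂) x y)
    - p ^ 2 * dY (xi a₀ a₁₁ a₁₂ c₁ c₂) x y

/-- The ∂_f-component of the lift: the second prolongation coefficient for `y'' = f`,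
`ζ⁽²⁾ = ζ_x + pζ_y + fζ_p − f(ξ_x + pξ_y)`. -/
def Fc (a₀ a₁₁ a₁₂ b₀ a₂₁ a₂₂ c₁ c₂ : ℝ) (x y p f : ℝ) : ℝ :=
  deriv (fun t => zeta a₀ a₁₁ a₁₂ b₀ a₂₁ a₂₂ c₁ c₂ t y p) x
    + p * deriv (fun t => zeta a₀ a₁₁ a₁₂ b₀ a₂₁ a₂₂ c₁ c₂ x t p) y
    + f * deriv (fun t => zeta a₀ a₁₁ a₁₂ b₀ a₂₁ a₂₂ c₁ c₂ x y t) p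
    - f * (dX (xi a₀ a₁₁ a₁₂ c₁ c₂) x y + p * dY (xi a₀ a₁₁ a₁₂ c₁ c₂) x y)

/-- The ∂_{f_x}, ∂_{f_y}, ∂_{f_p}-components of the prolonged lift, by total-derivative
prolongation:  `Φ_i = d_i(F) − f_x d_i(ξ) − f_y d_i(η) − f_p d_i(ζ)`. -/
def PhiX (a₀ a₁₁ a₁₂ b₀ a₂₁ a₂₂ c₁ c₂ : ℝ) (x y p f fx fy fp : ℝ) : ℝ :=
  deriv (fun t => Fc a₀ a₁₁ a₁₂ b₀ a₂₁ a₂₂ c₁ c₂ t y p f) x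
    + fx * deriv (fun t => Fc a₀ a₁₁ a₁₂ b₀ a₂₁ a₂₂ c₁ c₂ x y p t) f
    - fx * dX (xi a₀ a₁₁ a₁₂ c₁ c₂) x y - fy * dX (eta b₀ a₂₁ a₂₂ c₁ c₂) x y
    - fp * deriv (fun t => zeta a₀ a₁₁ a₁₂ b₀ a₂₁ a₂₂ c₁ c₂ t y p) x

def PhiY (a₀ a₁₁ a₁₂ b₀ a₂₁ a₂₂ c₁ c₂ : ℝ) (x y p f fx fy fp : ℝ) : ℝ :=
  deriv (fun t => Fc a₀ a₁₁ a₁₂ b₀ a₂₁ a₂₂ c₁ c₂ x t p f) y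
    + fy * deriv (fun t => Fc a₀ a₁₁ a₁₂ b₀ a₂₁ a₂₂ c₁ c₂ x y p t) f
    - fx * dY (xi a₀ a₁₁ a₁₂ c₁ c₂) x y - fy * dY (eta b₀ a₂₁ a₂₂ c₁ c₂) x y
    - fp * deriv (fun t => zeta a₀ a₁₁ a₁₂ b₀ a₂₁ a₂₂ c₁ c₂ x t p) y

def PhiP (a₀ a₁₁ a₁₂ b₀ a₂₁ a₂₂ c₁ c₂ : ℝ) (x y p f fx fy fp : ℝ) : ℝ :=
  deriv (fun t => Fc a₀ a₁₁ a₁₂ b₀ a₂₁ a₂₂ c₁ c₂ x y t f) p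
    + fp * deriv (fun t => Fc a₀ a₁₁ a₁₂ b₀ a₂₁ a₂₂ c₁ c₂ x y p t) f
    - fx * deriv (fun t => xi a₀ a₁₁ a₁₂ c₁ c₂ x y) p
    - fy * deriv (fun t => eta b₀ a₂₁ a₂₂ c₁ c₂ x y) p
    - fp * deriv (fun t => zeta a₀ a₁₁ a₁₂ b₀ a₂₁ a₂₂ c₁ c₂ x y t) p

/-- `I₀ = f` is a relative invariant of weight
`μ(I₀) = −2a₁₁ + a₂₂ − 3a₁₂p − 3c₁x − 3c₂xp`, and `I₁ = p f_y f_p − 3 f f_y + f_x f_p` is a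
relative invariant of weight `μ(I₁) = −4a₁₁ + a₂₂ − 5a₁₂p − 7c₁x − c₂(5xp + 2y)`:
`X̂(I₁) = μ(I₁)·I₁` where `X̂` is the full prolongation of the 𝔰𝔩₃ field. -/

lemma deriv_quadratic (a b c t : ℝ) :
    deriv (fun s : ℝ => a + b * s + c * s ^ 2) t = b + 2 * c * t := by
  have h : HasDerivAt (fun s : ℝ => a + b * s + c * s ^ 2) (b + 2 * c * t) t := by
    have h1 : HasDerivAt (fun s : ℝ => a + b * s) b t := by
      simpa using ((hasDerivAt_id t).const_mul b).const_add a
    have h2 : HasDerivAt (fun s : ℝ => c * s ^ 2) (c * (2 * t)) t := by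
      simpa using (hasDerivAt_pow 2 t).const_mul c
    exact (h1.add h2).congr_deriv (by ring)
  exact h.deriv

lemma dX_xi (a₀ a₁₁ a₁₂ c₁ c₂ x y : ℝ) :
    dX (xi a₀ a₁₁ a₁₂ c₁ c₂) x y = a₁₁ + 2 * c₁ * x + c₂ * y := by
  unfold dX xi
  rw [show (fun t => a₀ + a₁₁ * t + a₁₂ * y + (c₁ * t + c₂ * y) * t)
      = (fun t : ℝ => (a₀ + a₁₂ * y) + (a₁₁ + c₂ * y) * t + c₁ * t ^ 2) from
      funext fun t => by ring, deriv_quadratic]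
  ring

lemma dY_xi (a₀ a₁₁ a₁₂ c₁ c₂ x y : ℝ) :
    dY (xi a₀ a₁₁ a₁₂ c₁ c₂) x y = a₁₂ + c₂ * x := by
  unfold dY xi
  rw [show (fun t => a₀ + a₁₁ * x + a₁₂ * t + (c₁ * x + c₂ * t) * x)
      = (fun t : ℝ => (a₀ + a₁₁ * x + c₁ * x * x) + (a₁₂ + c₂ * x) * t + 0 * t ^ 2) from
      funext fun t => by ring, deriv_quadratic]
  ring

lemma dX_eta (b₀ a₂₁ a₂₂ c₁ c₂ x y : ℝ) :
    dX (eta b₀ a₂₁ a₂₂ c₁ c₂) x y = a₂₁ + c₁ * y := by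
  unfold dX eta
  rw [show (fun t => b₀ + a₂₁ * t + a₂₂ * y + (c₁ * t + c₂ * y) * y)
      = (fun t : ℝ => (b₀ + a₂₂ * y + c₂ * y * y) + (a₂₁ + c₁ * y) * t + 0 * t ^ 2) from
      funext fun t => by ring, deriv_quadratic]
  ring

lemma dY_eta (b₀ a₂₁ a₂₂ c₁ c₂ x y : ℝ) :
    dY (eta b₀ a₂₁ a₂₂ c₁ c₂) x y = a₂₂ + c₁ * x + 2 * c₂ * y := by
  unfold dY eta
  rw [show (fun t => b₀ + a₂₁ * x + a₂₂ * t + (c₁ * x + c₂ * t) * t)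
      = (fun t : ℝ => (b₀ + a₂₁ * x) + (a₂₂ + c₁ * x) * t + c₂ * t ^ 2) from
      funext fun t => by ring, deriv_quadratic]

lemma zeta_eq (a₀ a₁₁ a₁₂ b₀ a₂₁ a₂₂ c₁ c₂ x y p : ℝ) :
    zeta a₀ a₁₁ a₁₂ b₀ a₂₁ a₂₂ c₁ c₂ x y p
      = a₂₁ + c₁ * y + p * (a₂₂ - a₁₁ - c₁ * x + c₂ * y) - p ^ 2 * (a₁₂ + c₂ * x) := by
  unfold zeta
  rw [dX_eta, dY_eta, dX_xi, dY_xi]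
  ring

lemma zeta_dx (a₀ a₁₁ a₁₂ b₀ a₂₁ a₂₂ c₁ c₂ x y p : ℝ) :
    deriv (fun t => zeta a₀ a₁₁ a₁₂ b₀ a₂₁ a₂₂ c₁ c₂ t y p) x = -c₁ * p - c₂ * p ^ 2 := by
  rw [show (fun t => zeta a₀ a₁₁ a₁₂ b₀ a₂₁ a₂₂ c₁ c₂ t y p)
      = (fun t : ℝ => (a₂₁ + c₁ * y + p * (a₂₂ - a₁₁ + c₂ * y) - p ^ 2 * a₁₂)
          + (-c₁ * p - c₂ * p ^ 2) * t + 0 * t ^ 2) from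
      funext fun t => by rw [zeta_eq]; ring, deriv_quadratic]
  ring

lemma zeta_dy (a₀ a₁₁ a₁₂ b₀ a₂₁ a₂₂ c₁ c₂ x y p : ℝ) :
    deriv (fun t => zeta a₀ a₁₁ a₁₂ b₀ a₂₁ a₂₂ c₁ c₂ x t p) y = c₁ + c₂ * p := by
  rw [show (fun t => zeta a₀ a₁₁ a₁₂ b₀ a₂₁ a₂₂ c₁ c₂ x t p)
      = (fun t : ℝ => (a₂₁ + p * (a₂₂ - a₁₁ - c₁ * x) - p ^ 2 * (a₁₂ + c₂ * x))
          + (c₁ + c₂ * p) * t + 0 * t ^ 2) from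
      funext fun t => by rw [zeta_eq]; ring, deriv_quadratic]
  ring

lemma zeta_dp (a₀ a₁₁ a₁₂ b₀ a₂₁ a₂₂ c₁ c₂ x y p : ℝ) :
    deriv (fun t => zeta a₀ a₁₁ a₁₂ b₀ a₂₁ a₂₂ c₁ c₂ x y t) p
      = (a₂₂ - a₁₁ - c₁ * x + c₂ * y) - 2 * p * (a₁₂ + c₂ * x) := by
  rw [show (fun t => zeta a₀ a₁₁ a₁₂ b₀ a₂₁ a₂₂ c₁ c₂ x y t)
      = (fun t : ℝ => (a₂₁ + c₁ * y) + (a₂₂ - a₁₁ - c₁ * x + c₂ * y) * t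
          + (-(a₁₂ + c₂ * x)) * t ^ 2) from
      funext fun t => by rw [zeta_eq]; ring, deriv_quadratic]
  ring

lemma Fc_eq (a₀ a₁₁ a₁₂ b₀ a₂₁ a₂₂ c₁ c₂ x y p f : ℝ) :
    Fc a₀ a₁₁ a₁₂ b₀ a₂₁ a₂₂ c₁ c₂ x y p f
      = (-2 * a₁₁ + a₂₂ - 3 * a₁₂ * p - 3 * c₁ * x - 3 * c₂ * x * p) * f := by
  unfold Fc
  rw [zeta_dx, zeta_dy, zeta_dp, dX_xi, dY_xi]
  ring

lemma Fc_dx (a₀ a₁₁ a₁₂ b₀ a₂₁ a₂₂ c₁ c₂ x y p f : ℝ) :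
    deriv (fun t => Fc a₀ a₁₁ a₁₂ b₀ a₂₁ a₂₂ c₁ c₂ t y p f) x
      = (-3 * c₁ - 3 * c₂ * p) * f := by
  rw [show (fun t => Fc a₀ a₁₁ a₁₂ b₀ a₂₁ a₂₂ c₁ c₂ t y p f)
      = (fun t : ℝ => (-2 * a₁₁ + a₂₂ - 3 * a₁₂ * p) * f
          + ((-3 * c₁ - 3 * c₂ * p) * f) * t + 0 * t ^ 2) from
      funext fun t => by rw [Fc_eq]; ring, deriv_quadratic]
  ring

lemma Fc_dy (a₀ a₁₁ a₁₂ b₀ a₂₁ a₂₂ c₁ c₂ x y p f : ℝ) :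
    deriv (fun t => Fc a₀ a₁₁ a₁₂ b₀ a₂₁ a₂₂ c₁ c₂ x t p f) y = 0 := by
  rw [show (fun t => Fc a₀ a₁₁ a₁₂ b₀ a₂₁ a₂₂ c₁ c₂ x t p f)
      = (fun _ : ℝ => (-2 * a₁₁ + a₂₂ - 3 * a₁₂ * p - 3 * c₁ * x - 3 * c₂ * x * p) * f) from
      funext fun t => by rw [Fc_eq]]
  exact deriv_const _ _

lemma Fc_dp (a₀ a₁₁ a₁₂ b₀ a₂₁ a₂₂ c₁ c₂ x y p f : ℝ) :
    deriv (fun t => Fc a₀ a₁₁ a₁₂ b₀ a₂₁ a₂₂ c₁ c₂ x y t f) p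
      = (-3 * a₁₂ - 3 * c₂ * x) * f := by
  rw [show (fun t => Fc a₀ a₁₁ a₁₂ b₀ a₂₁ a₂₂ c₁ c₂ x y t f)
      = (fun t : ℝ => (-2 * a₁₁ + a₂₂ - 3 * c₁ * x) * f
          + ((-3 * a₁₂ - 3 * c₂ * x) * f) * t + 0 * t ^ 2) from
      funext fun t => by rw [Fc_eq]; ring, deriv_quadratic]
  ring

lemma Fc_df (a₀ a₁₁ a₁₂ b₀ a₂₁ a₂₂ c₁ c₂ x y p f : ℝ) :
    deriv (fun t => Fc a₀ a₁₁ a₁₂ b₀ a₂₁ a₂₂ c₁ c₂ x y p t) f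
      = -2 * a₁₁ + a₂₂ - 3 * a₁₂ * p - 3 * c₁ * x - 3 * c₂ * x * p := by
  rw [show (fun t => Fc a₀ a₁₁ a₁₂ b₀ a₂₁ a₂₂ c₁ c₂ x y p t)
      = (fun t : ℝ => 0 + (-2 * a₁₁ + a₂₂ - 3 * a₁₂ * p - 3 * c₁ * x - 3 * c₂ * x * p) * t
          + 0 * t ^ 2) from
      funext fun t => by rw [Fc_eq]; ring, deriv_quadratic]
  ring


theorem I1_relative_invariant_sl3 (a₀ a₁₁ a₁₂ b₀ a₂₁ a₂₂ c₁ c₂ : ℝ)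
    (x y p f fx fy fp : ℝ) :
    -- X̂(I₀) = μ(I₀)·I₀ :
    Fc a₀ a₁₁ a₁₂ b₀ a₂₁ a₂₂ c₁ c₂ x y p f
      = (-2 * a₁₁ + a₂₂ - 3 * a₁₂ * p - 3 * c₁ * x - 3 * c₂ * x * p) * f ∧
    -- X̂(I₁) = μ(I₁)·I₁ :
    zeta a₀ a₁₁ a₁₂ b₀ a₂₁ a₂₂ c₁ c₂ x y p * (fy * fp)
      + Fc a₀ a₁₁ a₁₂ b₀ a₂₁ a₂₂ c₁ c₂ x y p f * (-3 * fy)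
      + PhiX a₀ a₁₁ a₁₂ b₀ a₂₁ a₂₂ c₁ c₂ x y p f fx fy fp * fp
      + PhiY a₀ a₁₁ a₁₂ b₀ a₂₁ a₂₂ c₁ c₂ x y p f fx fy fp * (p * fp - 3 * f)
      + PhiP a₀ a₁₁ a₁₂ b₀ a₂₁ a₂₂ c₁ c₂ x y p f fx fy fp * (p * fy + fx)
    = (-4 * a₁₁ + a₂₂ - 5 * a₁₂ * p - 7 * c₁ * x - c₂ * (5 * x * p + 2 * y))
        * (p * fy * fp - 3 * f * fy + fx * fp) := by
  constructor
  · exact Fc_eq a₀ a₁₁ a₁₂ b₀ a₂₁ a₂₂ c₁ c₂ x y p f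
  · unfold PhiX PhiY PhiP
    rw [Fc_dx, Fc_dy, Fc_dp, Fc_df, zeta_dx, zeta_dy, zeta_dp, dX_xi, dY_xi, dX_eta,
      dY_eta, zeta_eq, Fc_eq, deriv_const, deriv_const]
    ring
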